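/- Under the planted partition model for random hypergraphs, the eigen-gap of the population Laplacian dominates δ: if λ₁(𝓛) ≤ ⋯ ≤ λ_n(𝓛) denote the eigenvalues of 𝓛 in increasing order, then λ_{k+1}(𝓛) − λ_k(𝓛) ≥ δ, where δ = (λ_min(G) · min_{1≤i≤n} n_{ψ_i}/𝓓_{ii}) − max_{1≤i,j≤n} |J_{ii}/𝓓_{ii} − J_{jj}/𝓓_{jj}|. -/

import Mathlib

open MeasureTheory ProbabilityTheory Matrix Finset

noncomputable section

/-- The set of all possible edges: subsets of `Fin n` of cardinality between `2` and `M`. -/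
def edgeSet (n M : ℕ) : Finset (Finset (Fin n)) :=
  Finset.univ.filter fun ξ => 2 ≤ ξ.card ∧ ξ.card ≤ M

/-- Indicator vector of a possible edge. -/
def aVec {n : ℕ} (ξ : Finset (Fin n)) : Fin n → ℝ := fun i => if i ∈ ξ then 1 else 0

/-- Degree vector associated with edge weights `w`. -/
def degOf (n M : ℕ) (w : Finset (Fin n) → ℝ) (i : Fin n) : ℝ :=
  ∑ ξ ∈ edgeSet n M, w ξ * aVec ξ i

/-- Weighted adjacency matrix `∑_ξ (w ξ/|ξ|) a_ξ a_ξᵀ`. -/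
def adjOf (n M : ℕ) (w : Finset (Fin n) → ℝ) : Matrix (Fin n) (Fin n) ℝ :=
  Matrix.of fun i j => ∑ ξ ∈ edgeSet n M, (w ξ / (ξ.card : ℝ)) * (aVec ξ i * aVec ξ j)

/-- Diagonal matrix with entries `(√ d_i)⁻¹`. -/
def invSqrtDiag {n : ℕ} (dv : Fin n → ℝ) : Matrix (Fin n) (Fin n) ℝ :=
  Matrix.diagonal fun i => (Real.sqrt (dv i))⁻¹

/-- Normalized hypergraph Laplacian associated with edge weights `w`. -/
def lapOf (n M : ℕ) (w : Finset (Fin n) → ℝ) : Matrix (Fin n) (Fin n) ℝ :=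
  1 - invSqrtDiag (degOf n M w) * adjOf n M w * invSqrtDiag (degOf n M w)

/-- Minimum expected degree. -/
def dminOf (n M : ℕ) (p : Finset (Fin n) → ℝ) : ℝ := ⨅ i, degOf n M p i

/-- Assignment matrix of a partition. -/
def assign {n k : ℕ} (ψ : Fin n → Fin k) : Matrix (Fin n) (Fin k) ℝ :=
  Matrix.of fun i c => if ψ i = c then 1 else 0

/-- Size of a class. -/
def clsSize {n k : ℕ} (ψ : Fin n → Fin k) (c : Fin k) : ℕ :=
  (Finset.univ.filter fun i => ψ i = c).card

/-- Largest class size `n₁`. -/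
def maxClsSize {n k : ℕ} (ψ : Fin n → Fin k) : ℕ := Finset.univ.sup (clsSize ψ)

/-- Smallest class size `n_k`. -/
def minClsSize {n k : ℕ} (ψ : Fin n → Fin k) : ℕ := sInf (Set.range (clsSize ψ))

/-- `(ZᵀZ)^{-1/2}` for the assignment matrix `Z`. -/
def invSqrtClsDiag {n k : ℕ} (ψ : Fin n → Fin k) : Matrix (Fin k) (Fin k) ℝ :=
  Matrix.diagonal fun c => (Real.sqrt (clsSize ψ c))⁻¹

/-- Smallest (real) eigenvalue of a matrix. -/
def lambdaMin {k : ℕ} (G : Matrix (Fin k) (Fin k) ℝ) : ℝ :=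
  sInf {μ : ℝ | ∃ v : Fin k → ℝ, v ≠ 0 ∧ G.mulVec v = μ • v}

/-- The identifiability parameter `δ`. -/
def deltaParam {n k : ℕ} (M : ℕ) (ψ : Fin n → Fin k) (p : Finset (Fin n) → ℝ)
    (G : Matrix (Fin k) (Fin k) ℝ) (J : Fin n → ℝ) : ℝ :=
  lambdaMin G * (⨅ i : Fin n, (clsSize ψ (ψ i) : ℝ) / degOf n M p i)
    - ⨆ i : Fin n, ⨆ j : Fin n, |J i / degOf n M p i - J j / degOf n M p j|

/-- Euclidean norm of a vector. -/
def vecNorm {m : Type*} [Fintype m] (v : m → ℝ) : ℝ := Real.sqrt (∑ i, v i ^ 2)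

/-- Frobenius norm of a matrix. -/
def frobNorm {m l : Type*} [Fintype m] [Fintype l] (A : Matrix m l ℝ) : ℝ :=
  Real.sqrt (∑ i, ∑ j, A i j ^ 2)

/-- Spectral norm of a square matrix. -/
def specNorm {n : ℕ} (A : Matrix (Fin n) (Fin n) ℝ) : ℝ :=
  sSup {c : ℝ | ∃ v : Fin n → ℝ, vecNorm v ≤ 1 ∧ c = vecNorm (A.mulVec v)}

/-- Row-normalized version of a matrix. -/
def rowNormalize {n k : ℕ} (X : Matrix (Fin n) (Fin k) ℝ) : Matrix (Fin n) (Fin k) ℝ :=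
  Matrix.of fun i j => X i j / vecNorm (X i)

/-- `X` is a matrix of `k` leading orthonormal eigenvectors of `L`: its columns are
orthonormal eigenvectors, and every eigenvector orthogonal to them has a larger eigenvalue. -/
def LeadingEigvecs {n k : ℕ} (L : Matrix (Fin n) (Fin n) ℝ)
    (X : Matrix (Fin n) (Fin k) ℝ) : Prop :=
  Xᵀ * X = 1 ∧ ∃ Λ : Fin k → ℝ, L * X = X * Matrix.diagonal Λ ∧
    ∀ (μ : ℝ) (v : Fin n → ℝ), v ≠ 0 → L.mulVec v = μ • v → Xᵀ.mulVec v = 0 → ∀ a, Λ a ≤ μ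

/-- Membership in `𝓜_{n×k}(r)`: at most `r` distinct rows. -/
def hasAtMostRows {n k : ℕ} (r : ℕ) (S : Matrix (Fin n) (Fin k) ℝ) : Prop :=
  (Set.range fun i : Fin n => S i).ncard ≤ r

/-- The `k`-means objective `η_r(X) = min_{S ∈ 𝓜(r)} ‖X - S‖_F`. -/
def kmeansObj {n k : ℕ} (r : ℕ) (X : Matrix (Fin n) (Fin k) ℝ) : ℝ :=
  sInf {c : ℝ | ∃ S : Matrix (Fin n) (Fin k) ℝ, hasAtMostRows r S ∧ c = frobNorm (X - S)}

/-- Number of misclassified nodes, minimized over label permutations. -/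
def errCount {n k : ℕ} (ψ ψ' : Fin n → Fin k) : ℕ :=
  sInf {m : ℕ | ∃ σ : Equiv.Perm (Fin k),
    m = (Finset.univ.filter fun i => ψ i ≠ σ (ψ' i)).card}


namespace EigGapAux

lemma dot_lincomb {N m : ℕ} (b : Fin N → Fin N → ℝ)
    (hb : ∀ i j, b i ⬝ᵥ b j = if i = j then (1:ℝ) else 0)
    (ρ : Fin m → Fin N) (hρ : Function.Injective ρ) (c e : Fin m → ℝ) :
    (∑ j, c j • b (ρ j)) ⬝ᵥ (∑ j, e j • b (ρ j)) = ∑ j, c j * e j := by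
  have expand : (∑ j, c j • b (ρ j)) ⬝ᵥ (∑ j, e j • b (ρ j))
      = ∑ j, ∑ j', (c j' * e j) * (b (ρ j') ⬝ᵥ b (ρ j)) := by
    simp only [dotProduct, Finset.sum_apply, Pi.smul_apply, smul_eq_mul, Finset.sum_mul,
      Finset.mul_sum]
    rw [Finset.sum_comm]
    refine Finset.sum_congr rfl fun j _ => ?_
    rw [Finset.sum_comm]
    refine Finset.sum_congr rfl fun j' _ => ?_
    exact Finset.sum_congr rfl fun x _ => by ring
  rw [expand]
  refine Finset.sum_congr rfl fun j _ => ?_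
  rw [Finset.sum_eq_single j]
  · rw [hb]; simp
  · intro j' _ hne
    rw [hb, if_neg (fun h => hne (hρ h))]
    ring
  · intro h; exact absurd (Finset.mem_univ j) h

lemma sum_sq_pos_of_ne_zero {m : ℕ} {c : Fin m → ℝ} (hc : c ≠ 0) :
    0 < ∑ j, c j * c j := by
  obtain ⟨j0, hj0⟩ := Function.ne_iff.mp hc
  refine Finset.sum_pos' (fun j _ => mul_self_nonneg _) ⟨j0, Finset.mem_univ _, ?_⟩
  exact mul_self_pos.mpr (by simpa using hj0)

lemma lincomb_ne_zero {N m : ℕ} (b : Fin N → Fin N → ℝ)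
    (hb : ∀ i j, b i ⬝ᵥ b j = if i = j then (1:ℝ) else 0)
    (ρ : Fin m → Fin N) (hρ : Function.Injective ρ) (c : Fin m → ℝ) (hc : c ≠ 0) :
    (∑ j, c j • b (ρ j)) ≠ 0 := by
  intro h0
  have h := dot_lincomb b hb ρ hρ c c
  rw [h0] at h
  simp only [zero_dotProduct] at h
  exact absurd h.symm (ne_of_gt (sum_sq_pos_of_ne_zero hc))

/-- Linear map sending coefficients to the corresponding linear combination. -/
def lincombL {N m : ℕ} (w : Fin m → Fin N → ℝ) : (Fin m → ℝ) →ₗ[ℝ] (Fin N → ℝ) where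
  toFun c := ∑ j, c j • w j
  map_add' a b := by simp [add_smul, Finset.sum_add_distrib]
  map_smul' r a := by simp [Finset.smul_sum, smul_smul]

lemma exists_ker {m r : ℕ} (h : r < m) (f : (Fin m → ℝ) →ₗ[ℝ] (Fin r → ℝ)) :
    ∃ c : Fin m → ℝ, c ≠ 0 ∧ f c = 0 := by
  have hni : ¬ Function.Injective f := by
    intro hinj
    have := LinearMap.finrank_le_finrank_of_injective hinj
    rw [Module.finrank_fin_fun, Module.finrank_fin_fun] at this
    omega
  obtain ⟨x, y, hxy, hne⟩ := Function.not_injective_iff.mp hni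
  exact ⟨x - y, sub_ne_zero.mpr hne, by rw [map_sub, hxy, sub_self]⟩

lemma exists_ker2 {m s r : ℕ} (h : r < m + s)
    (f : ((Fin m → ℝ) × (Fin s → ℝ)) →ₗ[ℝ] (Fin r → ℝ)) :
    ∃ cu : (Fin m → ℝ) × (Fin s → ℝ), cu ≠ 0 ∧ f cu = 0 := by
  have hni : ¬ Function.Injective f := by
    intro hinj
    have := LinearMap.finrank_le_finrank_of_injective hinj
    rw [Module.finrank_prod, Module.finrank_fin_fun, Module.finrank_fin_fun,
      Module.finrank_fin_fun] at this
    omega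
  obtain ⟨x, y, hxy, hne⟩ := Function.not_injective_iff.mp hni
  exact ⟨x - y, sub_ne_zero.mpr hne, by rw [map_sub, hxy, sub_self]⟩


lemma quad_eigen {N m : ℕ} (A : Matrix (Fin N) (Fin N) ℝ) (b : Fin N → Fin N → ℝ)
    (μ : Fin N → ℝ)
    (hb : ∀ i j, b i ⬝ᵥ b j = if i = j then (1:ℝ) else 0)
    (heig : ∀ i, A *ᵥ b i = μ i • b i)
    (ρ : Fin m → Fin N) (hρ : Function.Injective ρ) (c : Fin m → ℝ) :
    (∑ j, c j • b (ρ j)) ⬝ᵥ A *ᵥ (∑ j, c j • b (ρ j)) = ∑ j, (c j * c j) * μ (ρ j) := by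
  have hAv : A *ᵥ (∑ j, c j • b (ρ j)) = ∑ j, (c j * μ (ρ j)) • b (ρ j) := by
    have : A *ᵥ (∑ j, c j • b (ρ j)) = ∑ j, c j • (A *ᵥ b (ρ j)) := by
      simp only [← Matrix.mulVecLin_apply, map_sum, _root_.map_smul]
    rw [this]
    exact Finset.sum_congr rfl fun j _ => by rw [heig, smul_smul]
  rw [hAv, dot_lincomb b hb ρ hρ]
  exact Finset.sum_congr rfl fun j _ => by ring

lemma ZGZt_apply {n k : ℕ} (ψ : Fin n → Fin k) (G : Matrix (Fin k) (Fin k) ℝ) (i j : Fin n) :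
    (assign ψ * G * (assign ψ)ᵀ) i j = G (ψ i) (ψ j) := by
  simp [Matrix.mul_apply, assign, Matrix.transpose_apply, ite_mul, mul_ite, one_mul, zero_mul,
    mul_one, mul_zero, Finset.sum_ite_eq, Finset.sum_ite_eq']

lemma lapOf_apply {n M : ℕ} (p : Finset (Fin n) → ℝ) (i j : Fin n) :
    lapOf n M p i j = (if i = j then (1:ℝ) else 0)
      - (Real.sqrt (degOf n M p i))⁻¹ * adjOf n M p i j * (Real.sqrt (degOf n M p j))⁻¹ := by
  simp only [lapOf, invSqrtDiag, Matrix.sub_apply, Matrix.one_apply, Matrix.mul_diagonal,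
    Matrix.diagonal_mul]

lemma fiber_sum {n k : ℕ} (ψ : Fin n → Fin k) (f : Fin n → ℝ) :
    ∑ c, ∑ i ∈ Finset.univ.filter (fun i => ψ i = c), f i = ∑ i, f i :=
  Finset.sum_fiberwise _ _ _

/-- The central quadratic-form identity for the normalized Laplacian. -/
lemma quad_form {n k M : ℕ} (ψ : Fin n → Fin k) (p : Finset (Fin n) → ℝ)
    (G : Matrix (Fin k) (Fin k) ℝ) (J : Fin n → ℝ)
    (hDpos : ∀ i, 0 < degOf n M p i)
    (hGJ : adjOf n M p = assign ψ * G * (assign ψ)ᵀ - Matrix.diagonal J)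
    (v : Fin n → ℝ) :
    v ⬝ᵥ (lapOf n M p) *ᵥ v
      = (∑ i, v i * v i) + (∑ i, (J i / degOf n M p i) * (v i * v i))
        - ∑ c, ∑ c', (∑ i ∈ Finset.univ.filter (fun i => ψ i = c),
              (Real.sqrt (degOf n M p i))⁻¹ * v i)
            * G c c'
            * (∑ i ∈ Finset.univ.filter (fun i => ψ i = c'),
              (Real.sqrt (degOf n M p i))⁻¹ * v i) := by
  set d : Fin n → ℝ := degOf n M p with hdd
  set y : Fin n → ℝ := fun i => (Real.sqrt (d i))⁻¹ * v i with hy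
  have hA : ∀ i j, adjOf n M p i j = G (ψ i) (ψ j) - (if i = j then J i else 0) := by
    intro i j
    rw [hGJ, Matrix.sub_apply, ZGZt_apply, Matrix.diagonal_apply]
  have step1 : v ⬝ᵥ (lapOf n M p) *ᵥ v
      = (∑ i, v i * v i) + (∑ i, (J i / d i) * (v i * v i))
        - ∑ i, ∑ j, y i * G (ψ i) (ψ j) * y j := by
    have hdot : v ⬝ᵥ (lapOf n M p) *ᵥ v = ∑ i, ∑ j, v i * (lapOf n M p i j * v j) := by
      simp [dotProduct, Matrix.mulVec, Finset.mul_sum]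
    rw [hdot]
    have hterm : ∀ i j, v i * (lapOf n M p i j * v j)
        = (if i = j then v i * v j else 0) + (if i = j then (J i / d i) * (v i * v j) else 0)
          - y i * G (ψ i) (ψ j) * y j := by
      intro i j
      rw [lapOf_apply, hA]
      by_cases h : i = j
      · subst h
        simp only [if_pos rfl, eq_self_iff_true, if_true, hy]
        have hs : (Real.sqrt (d i))⁻¹ * (Real.sqrt (d i))⁻¹ = (d i)⁻¹ := by
          rw [← mul_inv, Real.mul_self_sqrt (hDpos i).le]
        rw [div_eq_mul_inv, ← hs]
        ring
      · simp only [if_neg h, hy]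
        ring
    calc ∑ i, ∑ j, v i * (lapOf n M p i j * v j)
        = ∑ i, ∑ j, ((if i = j then v i * v j else 0)
            + (if i = j then (J i / d i) * (v i * v j) else 0)
          - y i * G (ψ i) (ψ j) * y j) := by
          exact Finset.sum_congr rfl fun i _ => Finset.sum_congr rfl fun j _ => hterm i j
      _ = (∑ i, v i * v i) + (∑ i, (J i / d i) * (v i * v i))
          - ∑ i, ∑ j, y i * G (ψ i) (ψ j) * y j := by
          simp only [Finset.sum_sub_distrib, Finset.sum_add_distrib, Finset.sum_ite_eq,
            Finset.mem_univ, if_true]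
  rw [step1]
  congr 1
  -- regroup the double sum by classes
  have inner : ∀ i, ∑ j, y i * G (ψ i) (ψ j) * y j
      = ∑ c', (y i * G (ψ i) c') * (∑ j ∈ Finset.univ.filter (fun j => ψ j = c'), y j) := by
    intro i
    rw [← fiber_sum ψ (fun j => y i * G (ψ i) (ψ j) * y j)]
    refine Finset.sum_congr rfl fun c' _ => ?_
    rw [Finset.mul_sum]
    refine Finset.sum_congr rfl fun j hj => ?_
    rw [(Finset.mem_filter.mp hj).2]
  have outer : ∑ i, ∑ j, y i * G (ψ i) (ψ j) * y j
      = ∑ c, ∑ i ∈ Finset.univ.filter (fun i => ψ i = c),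
          ∑ c', (y i * G (ψ i) c') * (∑ j ∈ Finset.univ.filter (fun j => ψ j = c'), y j) := by
    rw [fiber_sum ψ]
    exact Finset.sum_congr rfl fun i _ => inner i
  rw [outer]
  refine Finset.sum_congr rfl fun c _ => ?_
  rw [Finset.sum_comm]
  refine Finset.sum_congr rfl fun c' _ => ?_
  rw [Finset.sum_mul, Finset.sum_mul]
  refine Finset.sum_congr rfl fun i hi => ?_
  rw [(Finset.mem_filter.mp hi).2]

lemma dotProduct_self_nonneg {m : ℕ} (v : Fin m → ℝ) : 0 ≤ v ⬝ᵥ v :=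
  Finset.sum_nonneg fun i _ => mul_self_nonneg _

lemma dotProduct_self_pos {m : ℕ} {v : Fin m → ℝ} (hv : v ≠ 0) : 0 < v ⬝ᵥ v :=
  sum_sq_pos_of_ne_zero hv

lemma lambdaMin_quad {k : ℕ} (hk : 0 < k) (G : Matrix (Fin k) (Fin k) ℝ)
    (hG : G.IsHermitian) (x : Fin k → ℝ) :
    lambdaMin G * (x ⬝ᵥ x) ≤ x ⬝ᵥ G *ᵥ x := by
  haveI : Nonempty (Fin k) := ⟨⟨0, hk⟩⟩
  set b : Fin k → Fin k → ℝ := fun i => hG.eigenvectorBasis i with hbdef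
  have hb : ∀ i j, b i ⬝ᵥ b j = if i = j then (1:ℝ) else 0 := by
    intro i j
    have h := (orthonormal_iff_ite.mp hG.eigenvectorBasis.orthonormal) i j
    rw [dotProduct_comm]
    simpa [EuclideanSpace.inner_eq_star_dotProduct, hbdef] using h
  have heig : ∀ i, G *ᵥ b i = hG.eigenvalues i • b i := fun i =>
    hG.mulVec_eigenvectorBasis i
  obtain ⟨j0, hj0⟩ := Finite.exists_min hG.eigenvalues
  have key : ∀ z : Fin k → ℝ, hG.eigenvalues j0 * (z ⬝ᵥ z) ≤ z ⬝ᵥ G *ᵥ z := by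
    intro z
    set c : Fin k → ℝ := fun j => hG.eigenvectorBasis.repr (WithLp.toLp 2 z) j with hcdef
    have hz : z = ∑ j, c j • b (id j) := by
      have h := congrArg (WithLp.ofLp (p := 2)) (hG.eigenvectorBasis.sum_repr (WithLp.toLp 2 z))
      simp only [WithLp.ofLp_sum, WithLp.ofLp_smul, WithLp.ofLp_toLp] at h
      exact h.symm
    rw [hz, quad_eigen G b hG.eigenvalues hb heig id Function.injective_id c,
      dot_lincomb b hb id Function.injective_id c c, Finset.mul_sum]
    simp only [id_eq]
    refine Finset.sum_le_sum fun j _ => ?_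
    have := hj0 j
    nlinarith [mul_self_nonneg (c j)]
  have hb0 : b j0 ≠ 0 := by
    intro h
    have := hb j0 j0
    rw [h] at this
    simpa using this
  have hmem : hG.eigenvalues j0 ∈ {μ : ℝ | ∃ v : Fin k → ℝ, v ≠ 0 ∧ G.mulVec v = μ • v} :=
    ⟨b j0, hb0, heig j0⟩
  have hbddB : BddBelow {μ : ℝ | ∃ v : Fin k → ℝ, v ≠ 0 ∧ G.mulVec v = μ • v} := by
    refine ⟨hG.eigenvalues j0, fun μ hμ => ?_⟩
    obtain ⟨v, hv, hGv⟩ := hμ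
    have h1 : v ⬝ᵥ G *ᵥ v = μ * (v ⬝ᵥ v) := by
      rw [hGv, dotProduct_smul]
      simp
    have h2 := key v
    have h3 : 0 < v ⬝ᵥ v := dotProduct_self_pos hv
    rw [h1] at h2
    exact le_of_mul_le_mul_right h2 h3
  have hle : lambdaMin G ≤ hG.eigenvalues j0 := csInf_le hbddB hmem
  calc lambdaMin G * (x ⬝ᵥ x) ≤ hG.eigenvalues j0 * (x ⬝ᵥ x) :=
        mul_le_mul_of_nonneg_right hle (dotProduct_self_nonneg x)
    _ ≤ x ⬝ᵥ G *ᵥ x := key x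

lemma ZtDh_mulVec {n k : ℕ} (ψ : Fin n → Fin k) (dv : Fin n → ℝ) (v : Fin n → ℝ) (c : Fin k) :
    (((assign ψ)ᵀ * invSqrtDiag dv) *ᵥ v) c
      = ∑ i ∈ Finset.univ.filter (fun i => ψ i = c), (Real.sqrt (dv i))⁻¹ * v i := by
  have he : ∀ i, ((assign ψ)ᵀ * invSqrtDiag dv) c i
      = (if ψ i = c then 1 else 0) * (Real.sqrt (dv i))⁻¹ := by
    intro i
    rw [invSqrtDiag, Matrix.mul_diagonal]
    simp [assign, Matrix.transpose_apply]
  simp [Matrix.mulVec, dotProduct, he, Finset.sum_filter, ite_mul, one_mul, zero_mul,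
    mul_assoc]

lemma DhZ_mulVec {n k : ℕ} (ψ : Fin n → Fin k) (dv : Fin n → ℝ) (u : Fin k → ℝ) (i : Fin n) :
    ((invSqrtDiag dv * assign ψ) *ᵥ u) i = (Real.sqrt (dv i))⁻¹ * u (ψ i) := by
  have he : ∀ c, (invSqrtDiag dv * assign ψ) i c
      = (Real.sqrt (dv i))⁻¹ * (if ψ i = c then 1 else 0) := by
    intro c
    rw [invSqrtDiag, Matrix.diagonal_mul]
    simp [assign]
  simp [Matrix.mulVec, dotProduct, he, ite_mul, mul_ite, one_mul, zero_mul, mul_zero,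
    Finset.sum_ite_eq, Finset.sum_ite_eq']
end EigGapAux

open EigGapAux in
/-- The eigen-gap of the population Laplacian dominates `δ`: if the eigenvalues of `𝓛` are
listed in increasing order (via any sorting permutation of `h𝓛.eigenvalues`), then
`λ_{k+1}(𝓛) - λ_k(𝓛) ≥ δ`. -/
theorem eigengap_ge_delta
    (n k M : ℕ) (hk : 0 < k) (hkn : k < n)
    (ψ : Fin n → Fin k) (hsurj : Function.Surjective ψ)
    (p : Finset (Fin n) → ℝ)
    (hp0 : ∀ ξ, 0 ≤ p ξ) (hp1 : ∀ ξ, p ξ ≤ 1)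
    (hpcard : ∀ ξ, ξ ∉ edgeSet n M → p ξ = 0)
    (hpsym : ∀ ξ ξ' : Finset (Fin n),
      Multiset.map ψ ξ.val = Multiset.map ψ ξ'.val → p ξ = p ξ')
    (hDpos : ∀ i, 0 < degOf n M p i)
    (G : Matrix (Fin k) (Fin k) ℝ) (J : Fin n → ℝ)
    (hG : G.IsHermitian) (hJ : ∀ i j, ψ i = ψ j → J i = J j)
    (hGJ : adjOf n M p = assign ψ * G * (assign ψ)ᵀ - Matrix.diagonal J)
    (h𝓛 : (lapOf n M p).IsHermitian) :
    ∀ σ : Equiv.Perm (Fin n), Monotone (fun i => h𝓛.eigenvalues (σ i)) →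
      deltaParam M ψ p G J ≤
        h𝓛.eigenvalues (σ ⟨k, hkn⟩) - h𝓛.eigenvalues (σ ⟨k - 1, by omega⟩) := by
  intro σ hmono
  haveI : Nonempty (Fin n) := ⟨⟨0, by omega⟩⟩
  have hq0 : 0 ≤ ⨅ i : Fin n, (clsSize ψ (ψ i) : ℝ) / degOf n M p i :=
    Real.iInf_nonneg fun i => div_nonneg (Nat.cast_nonneg _) (hDpos i).le
  have hbd1 : ∀ i : Fin n, BddAbove (Set.range fun j : Fin n =>
      |J i / degOf n M p i - J j / degOf n M p j|) :=
    fun i => Set.Finite.bddAbove (Set.finite_range _)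
  have hbd2 : BddAbove (Set.range fun i : Fin n => ⨆ j : Fin n,
      |J i / degOf n M p i - J j / degOf n M p j|) :=
    Set.Finite.bddAbove (Set.finite_range _)
  have hpair : ∀ i j : Fin n, |J i / degOf n M p i - J j / degOf n M p j|
      ≤ ⨆ i : Fin n, ⨆ j : Fin n, |J i / degOf n M p i - J j / degOf n M p j| :=
    fun i j => le_trans (le_ciSup (hbd1 i) j) (le_ciSup hbd2 i)
  have hSup0 : 0 ≤ ⨆ i : Fin n, ⨆ j : Fin n,
      |J i / degOf n M p i - J j / degOf n M p j| := by
    have := hpair ⟨0, by omega⟩ ⟨0, by omega⟩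
    simpa using this
  have hdelta : deltaParam M ψ p G J
      = lambdaMin G * (⨅ i : Fin n, (clsSize ψ (ψ i) : ℝ) / degOf n M p i)
        - ⨆ i : Fin n, ⨆ j : Fin n, |J i / degOf n M p i - J j / degOf n M p j| := rfl
  have gap0 : h𝓛.eigenvalues (σ ⟨k - 1, by omega⟩) ≤ h𝓛.eigenvalues (σ ⟨k, hkn⟩) :=
    hmono (show (⟨k - 1, by omega⟩ : Fin n) ≤ ⟨k, hkn⟩ from by
      rw [Fin.mk_le_mk]; omega)
  rcases le_or_gt (lambdaMin G) 0 with hneg | hpos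
  · have h1 : lambdaMin G * (⨅ i : Fin n, (clsSize ψ (ψ i) : ℝ) / degOf n M p i) ≤ 0 :=
      mul_nonpos_of_nonpos_of_nonneg hneg hq0
    rw [hdelta]
    linarith
  -- main case
  set b : Fin n → Fin n → ℝ := fun i => h𝓛.eigenvectorBasis i with hbdef
  have hb : ∀ i j, b i ⬝ᵥ b j = if i = j then (1:ℝ) else 0 := by
    intro i j
    have h := (orthonormal_iff_ite.mp h𝓛.eigenvectorBasis.orthonormal) i j
    rw [dotProduct_comm]
    simpa [EuclideanSpace.inner_eq_star_dotProduct, hbdef] using h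
  have heig : ∀ i, lapOf n M p *ᵥ b i = h𝓛.eigenvalues i • b i := fun i =>
    h𝓛.mulVec_eigenvectorBasis i
  obtain ⟨imin, hmin⟩ := Finite.exists_min fun i : Fin n => J i / degOf n M p i
  obtain ⟨imax, hmax⟩ := Finite.exists_max fun i : Fin n => J i / degOf n M p i
  -- the infimum is a lower bound for the class-wise inverse-degree sums
  have hNq : ∀ c : Fin k,
      (⨅ i : Fin n, (clsSize ψ (ψ i) : ℝ) / degOf n M p i)
        ≤ ∑ i ∈ Finset.univ.filter (fun i => ψ i = c), (degOf n M p i)⁻¹ := by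
    intro c
    obtain ⟨i0, hi0c⟩ := hsurj c
    have hne : (Finset.univ.filter (fun i => ψ i = c)).Nonempty :=
      ⟨i0, by simp [hi0c]⟩
    obtain ⟨i1, hi1mem, hi1max⟩ :=
      Finset.exists_max_image (Finset.univ.filter (fun i => ψ i = c))
        (fun i => degOf n M p i) hne
    have hψi1 : ψ i1 = c := (Finset.mem_filter.mp hi1mem).2
    have hstep : (clsSize ψ (ψ i1) : ℝ) / degOf n M p i1
        ≤ ∑ i ∈ Finset.univ.filter (fun i => ψ i = c), (degOf n M p i)⁻¹ := by
      rw [hψi1, clsSize, div_eq_mul_inv]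
      have hconst : ((Finset.univ.filter (fun i => ψ i = c)).card : ℝ)
          * (degOf n M p i1)⁻¹
          = ∑ _i ∈ Finset.univ.filter (fun i => ψ i = c), (degOf n M p i1)⁻¹ := by
        rw [Finset.sum_const, nsmul_eq_mul]
      rw [hconst]
      exact Finset.sum_le_sum fun i hi => inv_anti₀ (hDpos i) (hi1max i hi)
    exact le_trans (ciInf_le (Set.Finite.bddBelow (Set.finite_range _)) i1) hstep
  -- Claim A : 1 + t_min ≤ λ_{k+1}
  have claimA : 1 + J imin / degOf n M p imin ≤ h𝓛.eigenvalues (σ ⟨k, hkn⟩) := by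
    have hρ1 : Function.Injective (fun j : Fin (k+1) =>
        σ (⟨j.1, by omega⟩ : Fin n)) := by
      intro a a' h
      have := σ.injective h
      exact Fin.ext (by simpa using congrArg Fin.val this)
    obtain ⟨c1, hc1ne, hc1ker⟩ := exists_ker (show k < k + 1 by omega)
      ((Matrix.mulVecLin ((assign ψ)ᵀ * invSqrtDiag (degOf n M p))).comp
        (lincombL (fun j : Fin (k+1) => b (σ (⟨j.1, by omega⟩ : Fin n)))))
    set v1 : Fin n → ℝ := ∑ j : Fin (k+1), c1 j • b (σ (⟨j.1, by omega⟩ : Fin n)) with hv1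
    have h0 : ((assign ψ)ᵀ * invSqrtDiag (degOf n M p)) *ᵥ v1 = 0 := by
      have h := hc1ker
      simp only [LinearMap.comp_apply, Matrix.mulVecLin_apply, lincombL,
        LinearMap.coe_mk, AddHom.coe_mk] at h
      exact h
    have hw1 : ∀ c, (∑ i ∈ Finset.univ.filter (fun i => ψ i = c),
        (Real.sqrt (degOf n M p i))⁻¹ * v1 i) = 0 := by
      intro c
      rw [← ZtDh_mulVec ψ (degOf n M p) v1 c, h0]
      rfl
    have hquad1 := quad_form ψ p G J hDpos hGJ v1
    have hGzero : (∑ c, ∑ c', (∑ i ∈ Finset.univ.filter (fun i => ψ i = c),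
          (Real.sqrt (degOf n M p i))⁻¹ * v1 i) * G c c'
        * (∑ i ∈ Finset.univ.filter (fun i => ψ i = c'),
          (Real.sqrt (degOf n M p i))⁻¹ * v1 i)) = 0 := by
      refine Finset.sum_eq_zero fun c _ => Finset.sum_eq_zero fun c' _ => ?_
      rw [hw1 c, hw1 c']
      ring
    have heq1 : v1 ⬝ᵥ lapOf n M p *ᵥ v1
        = (∑ i, v1 i * v1 i) + ∑ i, (J i / degOf n M p i) * (v1 i * v1 i) := by
      rw [hquad1, hGzero, sub_zero]
    have hquadE1 := quad_eigen (lapOf n M p) b h𝓛.eigenvalues hb heig _ hρ1 c1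
    have hnorm1 : (∑ j : Fin (k+1), c1 j * c1 j) = ∑ i, v1 i * v1 i :=
      (dot_lincomb b hb _ hρ1 c1 c1).symm
    have hS1pos : 0 < ∑ j : Fin (k+1), c1 j * c1 j := sum_sq_pos_of_ne_zero hc1ne
    have hts : (J imin / degOf n M p imin) * (∑ i, v1 i * v1 i)
        ≤ ∑ i, (J i / degOf n M p i) * (v1 i * v1 i) := by
      rw [Finset.mul_sum]
      exact Finset.sum_le_sum fun i _ =>
        mul_le_mul_of_nonneg_right (hmin i) (mul_self_nonneg _)
    have hlow : (1 + J imin / degOf n M p imin) * (∑ j : Fin (k+1), c1 j * c1 j)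
        ≤ v1 ⬝ᵥ lapOf n M p *ᵥ v1 := by
      rw [heq1, hnorm1]
      have hexp : (1 + J imin / degOf n M p imin) * (∑ i, v1 i * v1 i)
          = (∑ i, v1 i * v1 i) + (J imin / degOf n M p imin) * (∑ i, v1 i * v1 i) := by
        ring
      rw [hexp]
      linarith
    have hup : v1 ⬝ᵥ lapOf n M p *ᵥ v1
        ≤ h𝓛.eigenvalues (σ ⟨k, hkn⟩) * ∑ j : Fin (k+1), c1 j * c1 j := by
      rw [hquadE1, Finset.mul_sum]
      refine Finset.sum_le_sum fun j _ => ?_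
      have hle : h𝓛.eigenvalues (σ (⟨j.1, by omega⟩ : Fin n))
          ≤ h𝓛.eigenvalues (σ ⟨k, hkn⟩) := by
        refine hmono ?_
        rw [Fin.mk_le_mk]
        omega
      calc c1 j * c1 j * h𝓛.eigenvalues (σ (⟨j.1, by omega⟩ : Fin n))
          ≤ c1 j * c1 j * h𝓛.eigenvalues (σ ⟨k, hkn⟩) :=
            mul_le_mul_of_nonneg_left hle (mul_self_nonneg _)
        _ = h𝓛.eigenvalues (σ ⟨k, hkn⟩) * (c1 j * c1 j) := by ring
    exact le_of_mul_le_mul_right (le_trans hlow hup) hS1pos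
  -- Claim B : λ_k ≤ 1 + t_max - λmin(G) * q
  have claimB : h𝓛.eigenvalues (σ ⟨k - 1, by omega⟩)
      ≤ 1 + J imax / degOf n M p imax
        - lambdaMin G * (⨅ i : Fin n, (clsSize ψ (ψ i) : ℝ) / degOf n M p i) := by
    have hρ2 : Function.Injective (fun j : Fin (n - k + 1) =>
        σ (⟨k - 1 + j.1, by omega⟩ : Fin n)) := by
      intro a a' h
      have := σ.injective h
      have h2 := congrArg Fin.val this
      simp only [] at h2
      exact Fin.ext (by omega)
    obtain ⟨⟨c2, u⟩, hcune, hker2⟩ := exists_ker2 (show n < (n - k + 1) + k by omega)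
      ((lincombL (fun j : Fin (n - k + 1) =>
          b (σ (⟨k - 1 + j.1, by omega⟩ : Fin n)))).comp
            (LinearMap.fst ℝ (Fin (n - k + 1) → ℝ) (Fin k → ℝ))
        - (Matrix.mulVecLin (invSqrtDiag (degOf n M p) * assign ψ)).comp
            (LinearMap.snd ℝ (Fin (n - k + 1) → ℝ) (Fin k → ℝ)))
    set v2 : Fin n → ℝ := ∑ j : Fin (n - k + 1), c2 j • b (σ (⟨k - 1 + j.1, by omega⟩ : Fin n))
      with hv2
    have hveq : v2 = (invSqrtDiag (degOf n M p) * assign ψ) *ᵥ u := by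
      have h := hker2
      simp only [LinearMap.sub_apply, LinearMap.comp_apply, LinearMap.fst_apply,
        LinearMap.snd_apply, Matrix.mulVecLin_apply, lincombL, LinearMap.coe_mk,
        AddHom.coe_mk] at h
      rw [sub_eq_zero] at h
      exact h
    have hv2i : ∀ i, v2 i = (Real.sqrt (degOf n M p i))⁻¹ * u (ψ i) := by
      intro i
      rw [hveq]
      exact DhZ_mulVec ψ (degOf n M p) u i
    have hsqrtne : ∀ i, (Real.sqrt (degOf n M p i))⁻¹ ≠ 0 := fun i =>
      inv_ne_zero (ne_of_gt (Real.sqrt_pos.mpr (hDpos i)))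
    have hc2ne : c2 ≠ 0 := by
      intro h0
      have hv20 : v2 = 0 := by
        rw [hv2, h0]
        simp
      have hu0 : u = 0 := by
        funext a
        obtain ⟨i, hi⟩ := hsurj a
        have := hv2i i
        rw [hv20] at this
        have h1 : (Real.sqrt (degOf n M p i))⁻¹ * u (ψ i) = 0 := this.symm
        rcases mul_eq_zero.mp h1 with h | h
        · exact absurd h (hsqrtne i)
        · rw [← hi]; exact h
      exact hcune (by rw [Prod.ext_iff]; exact ⟨h0, hu0⟩)
    have hS2pos : 0 < ∑ j : Fin (n - k + 1), c2 j * c2 j := sum_sq_pos_of_ne_zero hc2ne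
    have hnorm2 : (∑ j : Fin (n - k + 1), c2 j * c2 j) = ∑ i, v2 i * v2 i :=
      (dot_lincomb b hb _ hρ2 c2 c2).symm
    have hquadE2 := quad_eigen (lapOf n M p) b h𝓛.eigenvalues hb heig _ hρ2 c2
    have hElow : h𝓛.eigenvalues (σ ⟨k - 1, by omega⟩) * (∑ j : Fin (n - k + 1), c2 j * c2 j)
        ≤ v2 ⬝ᵥ lapOf n M p *ᵥ v2 := by
      rw [hquadE2, Finset.mul_sum]
      refine Finset.sum_le_sum fun j _ => ?_
      have hle : h𝓛.eigenvalues (σ ⟨k - 1, by omega⟩)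
          ≤ h𝓛.eigenvalues (σ (⟨k - 1 + j.1, by omega⟩ : Fin n)) := by
        refine hmono ?_
        rw [Fin.mk_le_mk]
        omega
      calc h𝓛.eigenvalues (σ ⟨k - 1, by omega⟩) * (c2 j * c2 j)
          ≤ h𝓛.eigenvalues (σ (⟨k - 1 + j.1, by omega⟩ : Fin n)) * (c2 j * c2 j) :=
            mul_le_mul_of_nonneg_right hle (mul_self_nonneg _)
        _ = c2 j * c2 j * h𝓛.eigenvalues (σ (⟨k - 1 + j.1, by omega⟩ : Fin n)) := by ring
    -- structural computation
    have hsq : ∀ i, (Real.sqrt (degOf n M p i))⁻¹ * (Real.sqrt (degOf n M p i))⁻¹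
        = (degOf n M p i)⁻¹ := fun i => by
      rw [← mul_inv, Real.mul_self_sqrt (hDpos i).le]
    have hW : ∀ c, (∑ i ∈ Finset.univ.filter (fun i => ψ i = c),
        (Real.sqrt (degOf n M p i))⁻¹ * v2 i)
        = u c * (∑ i ∈ Finset.univ.filter (fun i => ψ i = c), (degOf n M p i)⁻¹) := by
      intro c
      rw [Finset.mul_sum]
      refine Finset.sum_congr rfl fun i hi => ?_
      rw [hv2i i, (Finset.mem_filter.mp hi).2, ← mul_assoc, hsq]
      ring
    have hvv2 : (∑ i, v2 i * v2 i)
        = ∑ c, (u c * u c) * (∑ i ∈ Finset.univ.filter (fun i => ψ i = c),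
            (degOf n M p i)⁻¹) := by
      rw [← fiber_sum ψ (fun i => v2 i * v2 i)]
      refine Finset.sum_congr rfl fun c _ => ?_
      rw [Finset.mul_sum]
      refine Finset.sum_congr rfl fun i hi => ?_
      rw [hv2i i, (Finset.mem_filter.mp hi).2]
      calc (Real.sqrt (degOf n M p i))⁻¹ * u c * ((Real.sqrt (degOf n M p i))⁻¹ * u c)
          = (Real.sqrt (degOf n M p i))⁻¹ * (Real.sqrt (degOf n M p i))⁻¹
            * (u c * u c) := by ring
        _ = u c * u c * (degOf n M p i)⁻¹ := by rw [hsq]; ring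
    set W : Fin k → ℝ := fun c =>
      u c * (∑ i ∈ Finset.univ.filter (fun i => ψ i = c), (degOf n M p i)⁻¹) with hWdef
    have hGterm : (∑ c, ∑ c', (∑ i ∈ Finset.univ.filter (fun i => ψ i = c),
          (Real.sqrt (degOf n M p i))⁻¹ * v2 i) * G c c'
        * (∑ i ∈ Finset.univ.filter (fun i => ψ i = c'),
          (Real.sqrt (degOf n M p i))⁻¹ * v2 i)) = W ⬝ᵥ G *ᵥ W := by
      simp only [dotProduct, Matrix.mulVec]
      refine Finset.sum_congr rfl fun c _ => ?_
      calc ∑ c', (∑ i ∈ Finset.univ.filter (fun i => ψ i = c),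
              (Real.sqrt (degOf n M p i))⁻¹ * v2 i) * G c c'
            * (∑ i ∈ Finset.univ.filter (fun i => ψ i = c'),
              (Real.sqrt (degOf n M p i))⁻¹ * v2 i)
          = ∑ c', W c * (G c c' * W c') := by
            refine Finset.sum_congr rfl fun c' _ => ?_
            rw [hW c, hW c']
            simp only [hWdef]
            ring
        _ = W c * ∑ c', G c c' * W c' := (Finset.mul_sum _ _ _).symm
    have hNc0 : ∀ c, 0 ≤ ∑ i ∈ Finset.univ.filter (fun i => ψ i = c),
        (degOf n M p i)⁻¹ := fun c =>
      Finset.sum_nonneg fun i _ => (inv_nonneg).mpr (hDpos i).le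
    have hWW : (⨅ i : Fin n, (clsSize ψ (ψ i) : ℝ) / degOf n M p i) * (∑ i, v2 i * v2 i)
        ≤ W ⬝ᵥ W := by
      rw [hvv2, Finset.mul_sum]
      refine Finset.sum_le_sum fun c _ => ?_
      simp only [hWdef, dotProduct]
      have h1 := hNq c
      have h2 := hNc0 c
      have h3 : (u c * u c) * (⨅ i : Fin n, (clsSize ψ (ψ i) : ℝ) / degOf n M p i)
          ≤ (u c * u c) * (∑ i ∈ Finset.univ.filter (fun i => ψ i = c),
            (degOf n M p i)⁻¹) := mul_le_mul_of_nonneg_left h1 (mul_self_nonneg _)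
      have h4 := mul_le_mul_of_nonneg_right h3 h2
      nlinarith [h4]
    have hGlow : lambdaMin G
          * ((⨅ i : Fin n, (clsSize ψ (ψ i) : ℝ) / degOf n M p i) * (∑ i, v2 i * v2 i))
        ≤ W ⬝ᵥ G *ᵥ W := by
      calc lambdaMin G
            * ((⨅ i : Fin n, (clsSize ψ (ψ i) : ℝ) / degOf n M p i) * (∑ i, v2 i * v2 i))
          ≤ lambdaMin G * (W ⬝ᵥ W) := mul_le_mul_of_nonneg_left hWW hpos.le
        _ ≤ W ⬝ᵥ G *ᵥ W := lambdaMin_quad hk G hG W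
    have hts2 : (∑ i, (J i / degOf n M p i) * (v2 i * v2 i))
        ≤ (J imax / degOf n M p imax) * (∑ i, v2 i * v2 i) := by
      rw [Finset.mul_sum]
      exact Finset.sum_le_sum fun i _ =>
        mul_le_mul_of_nonneg_right (hmax i) (mul_self_nonneg _)
    have hquad2 := quad_form ψ p G J hDpos hGJ v2
    have hup2 : v2 ⬝ᵥ lapOf n M p *ᵥ v2
        ≤ (1 + J imax / degOf n M p imax
            - lambdaMin G * (⨅ i : Fin n, (clsSize ψ (ψ i) : ℝ) / degOf n M p i))
          * (∑ j : Fin (n - k + 1), c2 j * c2 j) := by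
      rw [hquad2, hGterm, hnorm2]
      have hexp : (1 + J imax / degOf n M p imax
            - lambdaMin G * (⨅ i : Fin n, (clsSize ψ (ψ i) : ℝ) / degOf n M p i))
          * (∑ i, v2 i * v2 i)
          = (∑ i, v2 i * v2 i) + (J imax / degOf n M p imax) * (∑ i, v2 i * v2 i)
            - lambdaMin G * ((⨅ i : Fin n, (clsSize ψ (ψ i) : ℝ) / degOf n M p i)
              * (∑ i, v2 i * v2 i)) := by
        ring
      rw [hexp]
      linarith
    exact le_of_mul_le_mul_right (le_trans hElow hup2) hS2pos
  have hspread : J imax / degOf n M p imax - J imin / degOf n M p imin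
      ≤ ⨆ i : Fin n, ⨆ j : Fin n, |J i / degOf n M p i - J j / degOf n M p j| :=
    le_trans (le_abs_self _) (hpair imax imin)
  rw [hdelta]
  linarith

end
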